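/- Let G be a nonempty finite set of literals (the goal), δ an a-state, and p a conditional plan with Φ̂(p, δ) ≠ ⊥. If G ⊆ δ' for every δ' ∈ Φ̂(p, δ), then Φ̂(reduct_δ(p), δ) ≠ ⊥ and G ⊆ δ'' for every δ'' ∈ Φ̂(reduct_δ(p), δ). -/

import Mathlib

noncomputable section
attribute [local instance] Classical.propDecidable

/-- A literal over the set of fluents `F`: a fluent together with a sign
(`true` for the fluent `f` itself, `false` for its negation `¬f`). -/
abbrev Lit (F : Type) : Type := F × Bool

/-- The complement `¬l` of a literal `l` (so that `¬¬f = f`). -/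
def Lit.compl {F : Type} (l : Lit F) : Lit F := (l.1, !l.2)

/-- `¬γ = {¬l | l ∈ γ}`. -/
def negLits {F : Type} (γ : Set (Lit F)) : Set (Lit F) := Lit.compl '' γ

/-- A set of literals is consistent if it contains no complementary pair. -/
def ConsistentLits {F : Type} (σ : Set (Lit F)) : Prop :=
  ∀ l : Lit F, ¬(l ∈ σ ∧ Lit.compl l ∈ σ)

/-- A static causal law `if(head, body)`: the body is a finite nonempty set of literals. -/
structure StaticLaw (F : Type) where
  head : Lit F
  body : Finset (Lit F)
  body_nonempty : body.Nonempty

/-- A set of literals `σ` satisfies the static causal law `r` if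
`body ⊆ σ` implies `head ∈ σ`. -/
def SatLaw {F : Type} (σ : Set (Lit F)) (r : StaticLaw F) : Prop :=
  ↑r.body ⊆ σ → r.head ∈ σ

/-- `σ` satisfies every static causal law in `D`. -/
def ClosedUnder {F : Type} (D : Set (StaticLaw F)) (σ : Set (Lit F)) : Prop :=
  ∀ r ∈ D, SatLaw σ r

/-- `Cl D σ`: the smallest set of literals containing `σ` and satisfying every
static causal law in `D`. -/
def Cl {F : Type} (D : Set (StaticLaw F)) (σ : Set (Lit F)) : Set (Lit F) :=
  ⋂₀ {τ | σ ⊆ τ ∧ ClosedUnder D τ}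

/-- An interpretation: for each fluent exactly one of `f`, `¬f` belongs to it
(complete and consistent). -/
def Interp {F : Type} (σ : Set (Lit F)) : Prop :=
  ∀ f : F, (((f, true) : Lit F) ∈ σ ∨ ((f, false) : Lit F) ∈ σ) ∧
    ¬(((f, true) : Lit F) ∈ σ ∧ ((f, false) : Lit F) ∈ σ)

/-- A state: an interpretation satisfying all static causal laws in `D`. -/
def IsState {F : Type} (D : Set (StaticLaw F)) (s : Set (Lit F)) : Prop :=
  Interp s ∧ ClosedUnder D s

/-- An a-state: a consistent set of literals satisfying all static causal laws in `D`. -/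
def AState {F : Type} (D : Set (StaticLaw F)) (δ : Set (Lit F)) : Prop :=
  ConsistentLits δ ∧ ClosedUnder D δ

/-- A set of literals is valid if it is contained in some state. -/
def ValidA {F : Type} (D : Set (StaticLaw F)) (δ : Set (Lit F)) : Prop :=
  ∃ s, IsState D s ∧ δ ⊆ s

/-- A domain description: executability conditions `executable(a, ψ)`,
dynamic causal laws `causes(a, l, φ)`, static causal laws `if(l, φ)`, and
k-propositions `determines(a, θ)`. -/
structure ActionDom (F A : Type) where
  execs : Set (A × Finset (Lit F))
  dyn : Set (A × Lit F × Finset (Lit F))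
  stat : Set (StaticLaw F)
  kprops : Set (A × Finset (Lit F))

namespace ActionDom

variable {F A : Type}

/-- A non-sensing action: one occurring in a dynamic causal law. -/
def NonSensing (D : ActionDom F A) (a : A) : Prop := ∃ l φ, (a, l, φ) ∈ D.dyn

/-- A sensing action: one occurring in a k-proposition. -/
def Sensing (D : ActionDom F A) (a : A) : Prop := ∃ θ, (a, θ) ∈ D.kprops

/-- Structural conditions on a domain description: all components are finite,
every k-proposition senses at least two literals, non-sensing and sensing actions
are disjoint, and each sensing action occurs in at most one k-proposition. -/
structure WellFormed (D : ActionDom F A) : Prop where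
  execs_finite : D.execs.Finite
  dyn_finite : D.dyn.Finite
  stat_finite : D.stat.Finite
  kprops_finite : D.kprops.Finite
  kprops_card : ∀ p ∈ D.kprops, 2 ≤ p.2.card
  sensing_disjoint : ∀ a : A, ¬(D.NonSensing a ∧ D.Sensing a)
  kprops_unique : ∀ a θ₁ θ₂, (a, θ₁) ∈ D.kprops → (a, θ₂) ∈ D.kprops → θ₁ = θ₂

/-- `a` is executable in `σ`: some `executable(a, ψ)` of `D` has `ψ ⊆ σ`. -/
def Executable (D : ActionDom F A) (a : A) (σ : Set (Lit F)) : Prop :=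
  ∃ ψ, (a, ψ) ∈ D.execs ∧ ↑ψ ⊆ σ

/-- `E(a, σ) = {l | D contains causes(a, l, φ) with φ ⊆ σ}`. -/
def Eff (D : ActionDom F A) (a : A) (σ : Set (Lit F)) : Set (Lit F) :=
  {l | ∃ φ, (a, l, φ) ∈ D.dyn ∧ ↑φ ⊆ σ}

/-- `e(a, σ) = Cl_D(E(a, σ))`. -/
def eEff (D : ActionDom F A) (a : A) (σ : Set (Lit F)) : Set (Lit F) :=
  Cl D.stat (D.Eff a σ)

/-- The possible-next-states function
`Res^c_D(a, s) = {s' | s' is a state and s' = Cl_D(E(a,s) ∪ (s ∩ s'))}`. -/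
def ResC (D : ActionDom F A) (a : A) (s : Set (Lit F)) : Set (Set (Lit F)) :=
  {s' | IsState D.stat s' ∧ s' = Cl D.stat (D.Eff a s ∪ (s ∩ s'))}

/-- A consistent domain description: `Res^c_D(a, s) ≠ ∅` for every state `s` and
action `a` executable in `s`. -/
def ConsistentDom (D : ActionDom F A) : Prop :=
  ∀ s a, IsState D.stat s → D.Executable a s → (D.ResC a s).Nonempty

/-- `pc^i(a, δ)`. -/
def pcIter (D : ActionDom F A) (a : A) (δ : Set (Lit F)) : ℕ → Set (Lit F)
  | 0 => {l | ∃ φ, (a, l, φ) ∈ D.dyn ∧ l ∉ δ ∧ negLits ↑φ ∩ δ = ∅}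
  | i + 1 => D.pcIter a δ i ∪
      {l | ∃ r ∈ D.stat, r.head = l ∧ l ∉ δ ∧ (↑r.body ∩ D.pcIter a δ i).Nonempty ∧
        negLits ↑r.body ∩ D.eEff a δ = ∅}

/-- `pc(a, δ) = ⋃_{i ≥ 0} pc^i(a, δ)`. -/
def pc (D : ActionDom F A) (a : A) (δ : Set (Lit F)) : Set (Lit F) :=
  ⋃ i, D.pcIter a δ i

/-- `Cl_D(e(a, δ) ∪ (δ ∖ ¬pc(a, δ)))`, the candidate next a-state after a
non-sensing action. -/
def nsNext (D : ActionDom F A) (a : A) (δ : Set (Lit F)) : Set (Lit F) :=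
  Cl D.stat (D.eEff a δ ∪ (δ \ negLits (D.pc a δ)))

/-- The 0-result function `Res_D(a, δ)` (for `a` executable in `δ`): for a sensing
action with k-proposition `determines(a, θ)`, the consistent sets `Cl_D(δ ∪ {g})`,
`g ∈ θ`; for a non-sensing action, `{Cl_D(e(a,δ) ∪ (δ ∖ ¬pc(a,δ)))}` if consistent,
and `∅` otherwise. -/
def Res (D : ActionDom F A) (a : A) (δ : Set (Lit F)) : Set (Set (Lit F)) :=
  if D.Sensing a then
    {δ' | ∃ θ, (a, θ) ∈ D.kprops ∧ ∃ g ∈ θ, δ' = Cl D.stat (δ ∪ {g}) ∧ ConsistentLits δ'}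
  else
    {δ' | δ' = D.nsNext a δ ∧ ConsistentLits δ'}

/-- The transition function: `⊥` (i.e. `none`) if `a` is not executable in `δ`,
and `Res_D(a, δ)` otherwise. -/
def Phi (D : ActionDom F A) (a : A) (δ : Set (Lit F)) : Option (Set (Set (Lit F))) :=
  if D.Executable a δ then some (D.Res a δ) else none

/-- The assumption that for every k-proposition `determines(a, θ)` of `D`,
in every state exactly one literal of `θ` holds. -/
def OneOfAssumption (D : ActionDom F A) : Prop :=
  ∀ a θ, (a, θ) ∈ D.kprops → ∀ s, IsState D.stat s → ∃! g : Lit F, g ∈ θ ∧ g ∈ s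

end ActionDom

/-- Conditional plans: the empty plan `[]`; `[a; p]` for a (non-sensing) action `a`;
and `[a; cases({g → cont g})]` for a (sensing) action `a`, where `cont` assigns a
sub-plan to each sensed literal. -/
inductive CondPlan (F A : Type) : Type where
  | nil : CondPlan F A
  | seq : A → CondPlan F A → CondPlan F A
  | branch : A → (Lit F → CondPlan F A) → CondPlan F A

/-- Well-formed conditional plans of a domain: `seq` uses non-sensing actions and
`branch` uses sensing actions. -/
def IsPlan {F A : Type} (D : ActionDom F A) : CondPlan F A → Prop
  | .nil => True
  | .seq a p => D.NonSensing a ∧ IsPlan D p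
  | .branch a cont => D.Sensing a ∧ ∀ g : Lit F, IsPlan D (cont g)

/-- The extended transition function `Φ̂`: maps a conditional plan and an a-state to a
set of a-states, or `none` (representing `⊥`, which absorbs unions). -/
def PhiHat {F A : Type} (D : ActionDom F A) :
    CondPlan F A → Set (Lit F) → Option (Set (Set (Lit F)))
  | .nil, δ => some {δ}
  | .seq a q, δ =>
    match D.Phi a δ with
    | none => none
    | some S =>
      if ∀ δ' ∈ S, (PhiHat D q δ').isSome then
        some (⋃ δ' ∈ S, (PhiHat D q δ').getD ∅)
      else none
  | .branch a cont, δ =>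
    match D.Phi a δ with
    | none => none
    | some S =>
      if ∀ g : Lit F, ∀ δ' ∈ S, (∃ θ, (a, θ) ∈ D.kprops ∧ g ∈ θ) → g ∈ δ' →
          (PhiHat D (cont g) δ').isSome then
        some (⋃ g : Lit F, ⋃ δ' ∈ S,
          ⋃ (_ : (∃ θ, (a, θ) ∈ D.kprops ∧ g ∈ θ) ∧ g ∈ δ'),
            (PhiHat D (cont g) δ').getD ∅)
      else none

/-- The reduct of a plan with respect to an a-state `δ` and a goal `G`. -/
def reduct {F A : Type} (D : ActionDom F A) (G : Finset (Lit F)) :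
    CondPlan F A → Set (Lit F) → CondPlan F A
  | .nil, _ => .nil
  | .seq a q, δ =>
    if ↑G ⊆ δ then .nil
    else if h : ∃ δ' : Set (Lit F), D.Phi a δ = some {δ'} then
      .seq a (reduct D G q h.choose)
    else .seq a .nil
  | .branch a cont, δ =>
    if ↑G ⊆ δ then .nil
    else if h : ∃ g : Lit F, (∃ θ, (a, θ) ∈ D.kprops ∧ g ∈ θ) ∧ g ∈ δ then
      reduct D G (cont h.choose) δ
    else
      .branch a (fun g =>
        if ConsistentLits (Cl D.stat (δ ∪ {g})) then
          reduct D G (cont g) (Cl D.stat (δ ∪ {g}))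
        else .nil)

section AuxLemmas

variable {F A : Type}

lemma subset_Cl (D : Set (StaticLaw F)) (σ : Set (Lit F)) : σ ⊆ Cl D σ :=
  fun _ hl => Set.mem_sInter.mpr (fun _ hτ => hτ.1 hl)

lemma Cl_min {D : Set (StaticLaw F)} {σ τ : Set (Lit F)} (h1 : σ ⊆ τ)
    (h2 : ClosedUnder D τ) : Cl D σ ⊆ τ :=
  Set.sInter_subset_of_mem ⟨h1, h2⟩

lemma Cl_closed (D : Set (StaticLaw F)) (σ : Set (Lit F)) : ClosedUnder D (Cl D σ) := by
  intro r hr hbody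
  refine Set.mem_sInter.mpr (fun τ hτ => ?_)
  exact hτ.2 r hr (hbody.trans (Set.sInter_subset_of_mem hτ))

lemma Cl_mono {D : Set (StaticLaw F)} {σ σ' : Set (Lit F)} (h : σ ⊆ σ') :
    Cl D σ ⊆ Cl D σ' :=
  Cl_min (h.trans (subset_Cl D σ')) (Cl_closed D σ')

lemma Cl_eq_self {D : Set (StaticLaw F)} {σ : Set (Lit F)} (h : ClosedUnder D σ) :
    Cl D σ = σ :=
  le_antisymm (Cl_min subset_rfl h) (subset_Cl D σ)

lemma consistent_mono {σ τ : Set (Lit F)} (h : σ ⊆ τ) (hτ : ConsistentLits τ) :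
    ConsistentLits σ :=
  fun l hl => hτ l ⟨h hl.1, h hl.2⟩

lemma Eff_mono (D : ActionDom F A) (a : A) {σ τ : Set (Lit F)} (h : σ ⊆ τ) :
    D.Eff a σ ⊆ D.Eff a τ := by
  rintro l ⟨φ, hφ, hsub⟩
  exact ⟨φ, hφ, hsub.trans h⟩

lemma eEff_mono (D : ActionDom F A) (a : A) {σ τ : Set (Lit F)} (h : σ ⊆ τ) :
    D.eEff a σ ⊆ D.eEff a τ :=
  Cl_mono (Eff_mono D a h)

lemma negLits_mono {σ τ : Set (Lit F)} (h : σ ⊆ τ) : negLits σ ⊆ negLits τ :=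
  Set.image_mono h

lemma pcIter_anti (D : ActionDom F A) (a : A) {δ₁ δ₂ : Set (Lit F)} (h : δ₁ ⊆ δ₂) :
    ∀ i, D.pcIter a δ₂ i ⊆ D.pcIter a δ₁ i := by
  intro i
  induction i with
  | zero =>
    rintro l ⟨φ, hdyn, hl, hneg⟩
    refine ⟨φ, hdyn, fun hc => hl (h hc), ?_⟩
    exact Set.eq_empty_of_subset_empty
      ((Set.inter_subset_inter_right _ h).trans hneg.subset)
  | succ i ihi =>
    rintro l (hl | ⟨r, hr, hhead, hl, hne, hnegE⟩)
    · exact Or.inl (ihi hl)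
    · refine Or.inr ⟨r, hr, hhead, fun hc => hl (h hc), ?_, ?_⟩
      · obtain ⟨x, hx1, hx2⟩ := hne
        exact ⟨x, hx1, ihi hx2⟩
      · exact Set.eq_empty_of_subset_empty
          ((Set.inter_subset_inter_right _ (eEff_mono D a h)).trans hnegE.subset)

lemma pc_anti (D : ActionDom F A) (a : A) {δ₁ δ₂ : Set (Lit F)} (h : δ₁ ⊆ δ₂) :
    D.pc a δ₂ ⊆ D.pc a δ₁ := by
  intro l hl
  obtain ⟨i, hi⟩ := Set.mem_iUnion.mp hl
  exact Set.mem_iUnion.mpr ⟨i, pcIter_anti D a h i hi⟩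

lemma nsNext_mono (D : ActionDom F A) (a : A) {δ₁ δ₂ : Set (Lit F)} (h : δ₁ ⊆ δ₂) :
    D.nsNext a δ₁ ⊆ D.nsNext a δ₂ := by
  apply Cl_mono
  apply Set.union_subset_union (eEff_mono D a h)
  rintro l ⟨hl, hnl⟩
  exact ⟨h hl, fun hc => hnl (negLits_mono (pc_anti D a h) hc)⟩

lemma Executable_mono (D : ActionDom F A) (a : A) {σ τ : Set (Lit F)} (h : σ ⊆ τ)
    (he : D.Executable a σ) : D.Executable a τ := by
  obtain ⟨ψ, h1, h2⟩ := he
  exact ⟨ψ, h1, h2.trans h⟩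

end AuxLemmas

section KeyLemmas

variable {F A : Type}

lemma phiHat_seq_eq (D : ActionDom F A) (b : A) (q : CondPlan F A)
    (δ : Set (Lit F)) (S : Set (Set (Lit F))) (h : D.Phi b δ = some S) :
    PhiHat D (.seq b q) δ =
      if ∀ δ' ∈ S, (PhiHat D q δ').isSome then
        some (⋃ δ' ∈ S, (PhiHat D q δ').getD ∅)
      else none := by
  rw [PhiHat, h]

lemma phiHat_seq_some (D : ActionDom F A) (b : A) (q : CondPlan F A)
    (δ : Set (Lit F)) (S : Set (Set (Lit F))) (h : D.Phi b δ = some S)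
    (hsome : ∀ δ' ∈ S, (PhiHat D q δ').isSome) :
    PhiHat D (.seq b q) δ = some (⋃ δ' ∈ S, (PhiHat D q δ').getD ∅) := by
  rw [phiHat_seq_eq D b q δ S h, if_pos hsome]

lemma phiHat_branch_eq (D : ActionDom F A) (b : A) (cont : Lit F → CondPlan F A)
    (δ : Set (Lit F)) (S : Set (Set (Lit F))) (h : D.Phi b δ = some S) :
    PhiHat D (.branch b cont) δ =
      if ∀ g : Lit F, ∀ δ' ∈ S, (∃ θ, (b, θ) ∈ D.kprops ∧ g ∈ θ) → g ∈ δ' →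
          (PhiHat D (cont g) δ').isSome then
        some (⋃ g : Lit F, ⋃ δ' ∈ S,
          ⋃ (_ : (∃ θ, (b, θ) ∈ D.kprops ∧ g ∈ θ) ∧ g ∈ δ'),
            (PhiHat D (cont g) δ').getD ∅)
      else none := by
  rw [PhiHat, h]

lemma phiHat_branch_some (D : ActionDom F A) (b : A) (cont : Lit F → CondPlan F A)
    (δ : Set (Lit F)) (S : Set (Set (Lit F))) (h : D.Phi b δ = some S)
    (hsome : ∀ g : Lit F, ∀ δ' ∈ S, (∃ θ, (b, θ) ∈ D.kprops ∧ g ∈ θ) → g ∈ δ' →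
      (PhiHat D (cont g) δ').isSome) :
    PhiHat D (.branch b cont) δ = some (⋃ g : Lit F, ⋃ δ' ∈ S,
      ⋃ (_ : (∃ θ, (b, θ) ∈ D.kprops ∧ g ∈ θ) ∧ g ∈ δ'),
        (PhiHat D (cont g) δ').getD ∅) := by
  rw [phiHat_branch_eq D b cont δ S h, if_pos hsome]

lemma key_reduct (D : ActionDom F A) (hD : D.WellFormed) (G : Finset (Lit F)) :
    ∀ p : CondPlan F A, IsPlan D p →
      ∀ τ δ' : Set (Lit F), AState D.stat τ → AState D.stat δ' → τ ⊆ δ' →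
      ∀ T : Set (Set (Lit F)), PhiHat D p τ = some T → (∀ x ∈ T, ↑G ⊆ x) →
      ∀ T' : Set (Set (Lit F)), PhiHat D p δ' = some T' → (∀ x ∈ T', ↑G ⊆ x) →
      ∃ S' : Set (Set (Lit F)), PhiHat D (reduct D G p τ) δ' = some S' ∧
        ∀ x ∈ S', ↑G ⊆ x := by
  intro p
  induction p with
  | nil =>
    intro _ τ δ' _ _ hsub T hT hg T' hT' hg'
    simp only [PhiHat] at hT'
    refine ⟨{δ'}, by simp [reduct, PhiHat], ?_⟩
    have hT'e : T' = {δ'} := (Option.some.inj hT').symm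
    intro x hx
    exact hg' x (hT'e ▸ hx)
  | seq b q ih =>
    intro hp τ δ' hτ hδ' hsub T hT hg T' hT' hg'
    have hns : D.NonSensing b := hp.1
    have hnsens : ¬ D.Sensing b := fun hs => hD.sensing_disjoint b ⟨hns, hs⟩
    rcases hP1 : D.Phi b τ with _ | S₁
    · rw [PhiHat, hP1] at hT
      exact absurd hT (by simp)
    rcases hP2 : D.Phi b δ' with _ | S₂
    · rw [PhiHat, hP2] at hT'
      exact absurd hT' (by simp)
    rw [phiHat_seq_eq D b q τ S₁ hP1] at hT
    rw [phiHat_seq_eq D b q δ' S₂ hP2] at hT'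
    split_ifs at hT with hcond₁
    split_ifs at hT' with hcond₂
    have hTeq := Option.some.inj hT
    have hT'eq := Option.some.inj hT'
    have hexec₁ : D.Executable b τ := by
      by_contra hc
      rw [ActionDom.Phi, if_neg hc] at hP1
      exact Option.some_ne_none _ hP1.symm
    have hexec₂ : D.Executable b δ' := Executable_mono D b hsub hexec₁
    have hS₁ : S₁ = {x | x = D.nsNext b τ ∧ ConsistentLits x} := by
      rw [ActionDom.Phi, if_pos hexec₁, ActionDom.Res, if_neg hnsens] at hP1
      exact (Option.some.inj hP1).symm
    have hS₂ : S₂ = {x | x = D.nsNext b δ' ∧ ConsistentLits x} := by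
      rw [ActionDom.Phi, if_pos hexec₂, ActionDom.Res, if_neg hnsens] at hP2
      exact (Option.some.inj hP2).symm
    rw [reduct]
    by_cases hGτ : ↑G ⊆ τ
    · rw [if_pos hGτ]
      refine ⟨{δ'}, by simp [PhiHat], ?_⟩
      intro x hx
      rw [Set.mem_singleton_iff] at hx
      exact hx ▸ (hGτ.trans hsub)
    rw [if_neg hGτ]
    by_cases h : ∃ σ : Set (Lit F), D.Phi b τ = some {σ}
    · rw [dif_pos h]
      have hspec : D.Phi b τ = some {h.choose} := h.choose_spec
      have hS₁s : S₁ = {h.choose} := Option.some.inj (hP1.symm.trans hspec)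
      have hσmem : h.choose ∈ S₁ := by rw [hS₁s]; exact rfl
      have hσ : h.choose = D.nsNext b τ ∧ ConsistentLits h.choose := by
        rw [hS₁] at hσmem; exact hσmem
      have hσstate : AState D.stat h.choose := by
        refine ⟨hσ.2, ?_⟩
        rw [hσ.1]
        exact Cl_closed _ _
      obtain ⟨T₁, hT₁⟩ := Option.isSome_iff_exists.mp (hcond₁ h.choose hσmem)
      have hT₁sub : ∀ y ∈ T₁, (↑G : Set (Lit F)) ⊆ y := by
        intro y hy
        apply hg
        rw [← hTeq, hS₁s]
        simp only [Set.mem_iUnion, Set.mem_singleton_iff, exists_prop]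
        exact ⟨h.choose, rfl, by simp only [hT₁, Option.getD_some]; exact hy⟩
      by_cases hcons₂ : ConsistentLits (D.nsNext b δ')
      · have hS₂s : S₂ = {D.nsNext b δ'} := by
          rw [hS₂]
          ext x
          simp only [Set.mem_setOf_eq, Set.mem_singleton_iff]
          exact ⟨fun hx => hx.1, fun hx => ⟨hx, hx ▸ hcons₂⟩⟩
        have hν₂state : AState D.stat (D.nsNext b δ') := ⟨hcons₂, Cl_closed _ _⟩
        have hν₂mem : D.nsNext b δ' ∈ S₂ := by rw [hS₂s]; exact rfl
        obtain ⟨T₂, hT₂⟩ := Option.isSome_iff_exists.mp (hcond₂ _ hν₂mem)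
        have hT₂sub : ∀ y ∈ T₂, (↑G : Set (Lit F)) ⊆ y := by
          intro y hy
          apply hg'
          rw [← hT'eq, hS₂s]
          simp only [Set.mem_iUnion, Set.mem_singleton_iff, exists_prop]
          exact ⟨D.nsNext b δ', rfl, by simp only [hT₂, Option.getD_some]; exact hy⟩
        have hsub₂ : h.choose ⊆ D.nsNext b δ' := by
          rw [hσ.1]
          exact nsNext_mono D b hsub
        obtain ⟨S₂', hS₂', hg₂'⟩ := ih hp.2 h.choose (D.nsNext b δ') hσstate hν₂state
          hsub₂ T₁ hT₁ hT₁sub T₂ hT₂ hT₂sub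
        refine ⟨S₂', ?_, hg₂'⟩
        rw [phiHat_seq_some D b _ δ' S₂ hP2 ?hsome]
        case hsome =>
          intro x hx
          rw [hS₂s, Set.mem_singleton_iff] at hx
          rw [hx, hS₂']
          rfl
        rw [hS₂s]
        congr 1
        rw [Set.biUnion_singleton, hS₂', Option.getD_some]
      · have hS₂e : S₂ = ∅ := by
          rw [hS₂]
          ext x
          simp only [Set.mem_setOf_eq, Set.mem_empty_iff_false, iff_false, not_and]
          intro h1 h2
          exact hcons₂ (h1 ▸ h2)
        refine ⟨∅, ?_, by simp⟩
        rw [phiHat_seq_some D b _ δ' S₂ hP2 (by rw [hS₂e]; simp)]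
        rw [hS₂e]
        simp
    · rw [dif_neg h]
      have hncons₁ : ¬ ConsistentLits (D.nsNext b τ) := by
        intro hc
        apply h
        refine ⟨D.nsNext b τ, ?_⟩
        rw [hP1]
        congr 1
        rw [hS₁]
        ext x
        simp only [Set.mem_setOf_eq, Set.mem_singleton_iff]
        exact ⟨fun hx => hx.1, fun hx => ⟨hx, hx ▸ hc⟩⟩
      have hncons₂ : ¬ ConsistentLits (D.nsNext b δ') :=
        fun hc => hncons₁ (consistent_mono (nsNext_mono D b hsub) hc)
      have hS₂e : S₂ = ∅ := by
        rw [hS₂]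
        ext x
        simp only [Set.mem_setOf_eq, Set.mem_empty_iff_false, iff_false, not_and]
        intro h1 h2
        exact hncons₂ (h1 ▸ h2)
      refine ⟨∅, ?_, by simp⟩
      rw [phiHat_seq_some D b _ δ' S₂ hP2 (by rw [hS₂e]; simp)]
      rw [hS₂e]
      simp
  | branch b cont ih =>
    intro hp τ δ' hτ hδ' hsub T hT hg T' hT' hg'
    have hsens : D.Sensing b := hp.1
    rcases hP1 : D.Phi b τ with _ | S₁
    · rw [PhiHat, hP1] at hT
      exact absurd hT (by simp)
    rcases hP2 : D.Phi b δ' with _ | S₂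
    · rw [PhiHat, hP2] at hT'
      exact absurd hT' (by simp)
    rw [phiHat_branch_eq D b cont τ S₁ hP1] at hT
    rw [phiHat_branch_eq D b cont δ' S₂ hP2] at hT'
    split_ifs at hT with hcond₁
    split_ifs at hT' with hcond₂
    have hTeq := Option.some.inj hT
    have hT'eq := Option.some.inj hT'
    have hexec₁ : D.Executable b τ := by
      by_contra hc
      rw [ActionDom.Phi, if_neg hc] at hP1
      exact Option.some_ne_none _ hP1.symm
    have hexec₂ : D.Executable b δ' := Executable_mono D b hsub hexec₁
    have hS₁ : S₁ = {x | ∃ θ, (b, θ) ∈ D.kprops ∧ ∃ g ∈ θ,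
        x = Cl D.stat (τ ∪ {g}) ∧ ConsistentLits x} := by
      rw [ActionDom.Phi, if_pos hexec₁, ActionDom.Res, if_pos hsens] at hP1
      exact (Option.some.inj hP1).symm
    have hS₂ : S₂ = {x | ∃ θ, (b, θ) ∈ D.kprops ∧ ∃ g ∈ θ,
        x = Cl D.stat (δ' ∪ {g}) ∧ ConsistentLits x} := by
      rw [ActionDom.Phi, if_pos hexec₂, ActionDom.Res, if_pos hsens] at hP2
      exact (Option.some.inj hP2).symm
    rw [reduct]
    by_cases hGτ : ↑G ⊆ τ
    · rw [if_pos hGτ]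
      refine ⟨{δ'}, by simp [PhiHat], ?_⟩
      intro x hx
      rw [Set.mem_singleton_iff] at hx
      exact hx ▸ (hGτ.trans hsub)
    rw [if_neg hGτ]
    by_cases h : ∃ g : Lit F, (∃ θ, (b, θ) ∈ D.kprops ∧ g ∈ θ) ∧ g ∈ τ
    · rw [dif_pos h]
      obtain ⟨hsensed₀, hg₀τ⟩ := h.choose_spec
      have hτmem : τ ∈ S₁ := by
        rw [hS₁]
        obtain ⟨θ, hθ, hg₀θ⟩ := hsensed₀
        refine ⟨θ, hθ, h.choose, hg₀θ, ?_, hτ.1⟩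
        rw [Set.union_eq_self_of_subset_right (Set.singleton_subset_iff.mpr hg₀τ),
          Cl_eq_self hτ.2]
      have hδ'mem : δ' ∈ S₂ := by
        rw [hS₂]
        obtain ⟨θ, hθ, hg₀θ⟩ := hsensed₀
        refine ⟨θ, hθ, h.choose, hg₀θ, ?_, hδ'.1⟩
        rw [Set.union_eq_self_of_subset_right
          (Set.singleton_subset_iff.mpr (hsub hg₀τ)), Cl_eq_self hδ'.2]
      obtain ⟨T₁, hT₁⟩ :=
        Option.isSome_iff_exists.mp (hcond₁ h.choose τ hτmem hsensed₀ hg₀τ)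
      obtain ⟨T₂, hT₂⟩ :=
        Option.isSome_iff_exists.mp (hcond₂ h.choose δ' hδ'mem hsensed₀ (hsub hg₀τ))
      have hT₁sub : ∀ y ∈ T₁, (↑G : Set (Lit F)) ⊆ y := by
        intro y hy
        apply hg
        rw [← hTeq]
        refine Set.mem_iUnion.mpr ⟨h.choose, Set.mem_iUnion.mpr ⟨τ,
          Set.mem_iUnion.mpr ⟨hτmem, Set.mem_iUnion.mpr ⟨⟨hsensed₀, hg₀τ⟩, ?_⟩⟩⟩⟩
        simp only [hT₁, Option.getD_some]
        exact hy
      have hT₂sub : ∀ y ∈ T₂, (↑G : Set (Lit F)) ⊆ y := by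
        intro y hy
        apply hg'
        rw [← hT'eq]
        refine Set.mem_iUnion.mpr ⟨h.choose, Set.mem_iUnion.mpr ⟨δ',
          Set.mem_iUnion.mpr ⟨hδ'mem, Set.mem_iUnion.mpr ⟨⟨hsensed₀, hsub hg₀τ⟩, ?_⟩⟩⟩⟩
        simp only [hT₂, Option.getD_some]
        exact hy
      exact ih h.choose (hp.2 h.choose) τ δ' hτ hδ' hsub T₁ hT₁ hT₁sub T₂ hT₂ hT₂sub
    · rw [dif_neg h]
      have main : ∀ g x, x ∈ S₂ → (∃ θ, (b, θ) ∈ D.kprops ∧ g ∈ θ) → g ∈ x →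
          ∃ V, PhiHat D (if ConsistentLits (Cl D.stat (τ ∪ {g})) then
              reduct D G (cont g) (Cl D.stat (τ ∪ {g})) else CondPlan.nil) x = some V ∧
            ∀ y ∈ V, (↑G : Set (Lit F)) ⊆ y := by
        intro g x hxS hsg hgx
        have hxinfo : ∃ θ, (b, θ) ∈ D.kprops ∧ ∃ g'' ∈ θ,
            x = Cl D.stat (δ' ∪ {g''}) ∧ ConsistentLits x := by
          rw [hS₂] at hxS; exact hxS
        obtain ⟨θx, hθx, g'', hg''θ, hxeq, hxcons⟩ := hxinfo
        have hxclosed : ClosedUnder D.stat x := by rw [hxeq]; exact Cl_closed _ _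
        have hxstate : AState D.stat x := ⟨hxcons, hxclosed⟩
        have hδ'x : δ' ⊆ x := by
          rw [hxeq]
          exact (Set.subset_union_left).trans (subset_Cl _ _)
        have hτgx : Cl D.stat (τ ∪ {g}) ⊆ x :=
          Cl_min (Set.union_subset (hsub.trans hδ'x)
            (Set.singleton_subset_iff.mpr hgx)) hxclosed
        have hconsg : ConsistentLits (Cl D.stat (τ ∪ {g})) :=
          consistent_mono hτgx hxcons
        rw [if_pos hconsg]
        have hτgstate : AState D.stat (Cl D.stat (τ ∪ {g})) := ⟨hconsg, Cl_closed _ _⟩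
        have hginτg : g ∈ Cl D.stat (τ ∪ {g}) :=
          subset_Cl _ _ (Set.mem_union_right _ rfl)
        have hτgS₁ : Cl D.stat (τ ∪ {g}) ∈ S₁ := by
          rw [hS₁]
          obtain ⟨θ, hθ, hgθ⟩ := hsg
          exact ⟨θ, hθ, g, hgθ, rfl, hconsg⟩
        obtain ⟨U₁, hU₁⟩ :=
          Option.isSome_iff_exists.mp (hcond₁ g _ hτgS₁ hsg hginτg)
        obtain ⟨U₂, hU₂⟩ :=
          Option.isSome_iff_exists.mp (hcond₂ g x hxS hsg hgx)
        have hU₁sub : ∀ y ∈ U₁, (↑G : Set (Lit F)) ⊆ y := by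
          intro y hy
          apply hg
          rw [← hTeq]
          refine Set.mem_iUnion.mpr ⟨g, Set.mem_iUnion.mpr ⟨Cl D.stat (τ ∪ {g}),
            Set.mem_iUnion.mpr ⟨hτgS₁, Set.mem_iUnion.mpr ⟨⟨hsg, hginτg⟩, ?_⟩⟩⟩⟩
          simp only [hU₁, Option.getD_some]
          exact hy
        have hU₂sub : ∀ y ∈ U₂, (↑G : Set (Lit F)) ⊆ y := by
          intro y hy
          apply hg'
          rw [← hT'eq]
          refine Set.mem_iUnion.mpr ⟨g, Set.mem_iUnion.mpr ⟨x,
            Set.mem_iUnion.mpr ⟨hxS, Set.mem_iUnion.mpr ⟨⟨hsg, hgx⟩, ?_⟩⟩⟩⟩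
          simp only [hU₂, Option.getD_some]
          exact hy
        exact ih g (hp.2 g) _ x hτgstate hxstate hτgx U₁ hU₁ hU₁sub U₂ hU₂ hU₂sub
      have hsome : ∀ g : Lit F, ∀ x ∈ S₂, (∃ θ, (b, θ) ∈ D.kprops ∧ g ∈ θ) → g ∈ x →
          (PhiHat D (if ConsistentLits (Cl D.stat (τ ∪ {g})) then
            reduct D G (cont g) (Cl D.stat (τ ∪ {g})) else CondPlan.nil) x).isSome := by
        intro g x hx hs hg2
        obtain ⟨V, hV, _⟩ := main g x hx hs hg2
        rw [hV]
        rfl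
      refine ⟨_, phiHat_branch_some D b _ δ' S₂ hP2 hsome, ?_⟩
      intro y hy
      obtain ⟨g, hy⟩ := Set.mem_iUnion.mp hy
      obtain ⟨x, hy⟩ := Set.mem_iUnion.mp hy
      obtain ⟨hxS, hy⟩ := Set.mem_iUnion.mp hy
      obtain ⟨⟨hs, hg2⟩, hy⟩ := Set.mem_iUnion.mp hy
      obtain ⟨V, hV, hVg⟩ := main g x hxS hs hg2
      rw [hV, Option.getD_some] at hy
      exact hVg y hy

end KeyLemmas

theorem reduct_preserves_goal
    {F A : Type} [Finite F] [Finite A]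
    (D : ActionDom F A) (hD : D.WellFormed) (honeof : D.OneOfAssumption)
    (G : Finset (Lit F)) (hG : G.Nonempty)
    (δ : Set (Lit F)) (hδ : AState D.stat δ)
    (p : CondPlan F A) (hp : IsPlan D p)
    (S : Set (Set (Lit F))) (hS : PhiHat D p δ = some S)
    (hgoal : ∀ δ' ∈ S, ↑G ⊆ δ') :
    ∃ S' : Set (Set (Lit F)), PhiHat D (reduct D G p δ) δ = some S' ∧
      ∀ δ'' ∈ S', ↑G ⊆ δ'' := by
  exact key_reduct D hD G p hp δ δ hδ hδ subset_rfl S hS hgoal S hS hgoal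

end
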